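/- Derivative bounds for the regularized maximum: for every p ≥ 1 there exists a constant C > 0 (depending only on ρ and p) such that for every η ∈ (0,∞)^p, every t ∈ ℝ^p and every multi-index α = (α_1,…,α_p) of nonnegative integers with 1 ≤ |α| = α_1+⋯+α_p ≤ 4, one has |∂^{|α|} M_η / ∂t_1^{α_1}⋯∂t_p^{α_p} (t)| ≤ C · min{η_j : α_j ≠ 0} · ∏_{i : α_i ≠ 0} η_i^{−α_i}. -/

import Mathlib

open MeasureTheory Convolution

section RegMaxAuxSection

namespace RegMaxAux

variable {p : ℕ}

noncomputable def PP (p : ℕ) (c : Fin p → ℝ → ℝ) : (Fin p → ℝ) → ℝ := fun y => ∏ j, c j (y j)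

lemma contDiff_PP {c : Fin p → ℝ → ℝ} (hc : ∀ j, ContDiff ℝ (⊤ : ℕ∞) (c j)) :
    ContDiff ℝ (⊤ : ℕ∞) (PP p c) := by
  classical
  have H : ∀ s : Finset (Fin p), ContDiff ℝ (⊤ : ℕ∞) (fun y : Fin p → ℝ => ∏ j ∈ s, c j (y j)) := by
    intro s
    induction s using Finset.induction with
    | empty => simpa using contDiff_const
    | @insert a s ha ih =>
      simp only [Finset.prod_insert ha]
      exact ((hc a).comp (ContinuousLinearMap.proj a : (Fin p → ℝ) →L[ℝ] ℝ).contDiff).mul ih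
  exact H Finset.univ

lemma hcs_PP {c : Fin p → ℝ → ℝ} (hs : ∀ j, HasCompactSupport (c j)) :
    HasCompactSupport (PP p c) := by
  classical
  apply HasCompactSupport.intro (isCompact_univ_pi fun j => hs j)
  intro y hy
  simp only [Set.mem_univ_pi, not_forall] at hy
  obtain ⟨j, hj⟩ := hy
  exact Finset.prod_eq_zero (Finset.mem_univ j) (image_eq_zero_of_notMem_tsupport hj)

lemma fderiv_PP {c : Fin p → ℝ → ℝ} (hc : ∀ j, ContDiff ℝ (⊤ : ℕ∞) (c j)) (y : Fin p → ℝ)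
    (i : Fin p) :
    fderiv ℝ (PP p c) y (Pi.single i 1) = PP p (Function.update c i (deriv (c i))) y := by
  classical
  have hf : ∀ j ∈ Finset.univ, HasFDerivAt (fun y : Fin p → ℝ => c j (y j))
      ((deriv (c j) (y j)) • (ContinuousLinearMap.proj j : (Fin p → ℝ) →L[ℝ] ℝ)) y := by
    intro j _
    have hproj : HasFDerivAt (fun v : Fin p → ℝ => v j)
        (ContinuousLinearMap.proj j : (Fin p → ℝ) →L[ℝ] ℝ) y :=
      (ContinuousLinearMap.proj j : (Fin p → ℝ) →L[ℝ] ℝ).hasFDerivAt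
    exact HasDerivAt.comp_hasFDerivAt y
      (((hc j).differentiable (by simp)).differentiableAt.hasDerivAt) hproj
  have H := (HasFDerivAt.finset_prod hf).fderiv
  have : fderiv ℝ (PP p c) y = ∑ i ∈ Finset.univ,
      (∏ j ∈ Finset.univ.erase i, c j (y j)) •
        ((deriv (c i) (y i)) • (ContinuousLinearMap.proj i : (Fin p → ℝ) →L[ℝ] ℝ)) := H
  rw [this]
  simp only [ContinuousLinearMap.coe_sum', Finset.sum_apply, ContinuousLinearMap.coe_smul',
    Pi.smul_apply, ContinuousLinearMap.proj_apply, smul_eq_mul]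
  rw [Finset.sum_eq_single i]
  · have hup : ∀ j, Function.update c i (deriv (c i)) j (y j)
        = if j = i then deriv (c i) (y i) else c j (y j) := by
      intro j
      by_cases h : j = i
      · subst h; simp
      · simp [Function.update_apply, h]
    rw [PP]
    rw [← Finset.mul_prod_erase Finset.univ _ (Finset.mem_univ i)]
    rw [hup i]
    simp only [if_pos rfl]
    have : ∀ j ∈ Finset.univ.erase i, Function.update c i (deriv (c i)) j (y j) = c j (y j) := by
      intro j hj
      rw [hup j, if_neg (Finset.ne_of_mem_erase hj)]
    rw [Finset.prod_congr rfl this]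
    simp [Pi.single_apply]
    ring
  · intro b _ hb
    simp [Pi.single_apply, hb.symm]
  · intro h; exact absurd (Finset.mem_univ i) h

end RegMaxAux

namespace RegMaxAux2
open RegMaxAux

variable {p : ℕ}

noncomputable abbrev Lmul : ℝ →L[ℝ] ℝ →L[ℝ] ℝ := ContinuousLinearMap.mul ℝ ℝ

lemma step (f : (Fin p → ℝ) → ℝ) (hf : LocallyIntegrable f volume)
    {c : Fin p → ℝ → ℝ} (hc : ∀ j, ContDiff ℝ (⊤ : ℕ∞) (c j))
    (hs : ∀ j, HasCompactSupport (c j)) (i : Fin p) (y : Fin p → ℝ) :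
    fderiv ℝ (f ⋆[Lmul, volume] PP p c) y (Pi.single i 1)
      = (f ⋆[Lmul, volume] PP p (Function.update c i (deriv (c i)))) y := by
  have hcsP := hcs_PP hs
  have hcP := contDiff_PP hc
  have h1 := hcsP.hasFDerivAt_convolution_right Lmul hf (hcP.of_le (mod_cast le_top)) y
  rw [h1.fderiv]
  rw [convolution_precompR_apply Lmul hf (hcsP.fderiv ℝ)
    (hcP.continuous_fderiv (by simp)) y (Pi.single i 1)]
  have : (fun a => fderiv ℝ (PP p c) a (Pi.single i 1))
      = PP p (Function.update c i (deriv (c i))) := funext fun a => fderiv_PP hc a i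
  rw [this]

lemma chain (f : (Fin p → ℝ) → ℝ) (hf : LocallyIntegrable f volume) :
    ∀ (n : ℕ) (v : Fin n → Fin p) (c : Fin p → ℝ → ℝ), (∀ j, ContDiff ℝ (⊤ : ℕ∞) (c j)) →
    (∀ j, HasCompactSupport (c j)) → ∀ t : Fin p → ℝ,
    iteratedFDeriv ℝ n (f ⋆[Lmul, volume] PP p c) t (fun k => Pi.single (v k) 1)
      = (f ⋆[Lmul, volume] PP p
          (fun j => iteratedDeriv ((Finset.univ.filter fun k => v k = j).card) (c j))) t := by
  intro n
  induction n with
  | zero =>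
    intro v c hc hs t
    have hz : (fun j => iteratedDeriv ((Finset.univ.filter fun k : Fin 0 => v k = j).card) (c j))
        = c := by funext j; simp
    rw [iteratedFDeriv_zero_apply, hz]
  | succ n IH =>
    intro v c hc hs t
    classical
    have hF : ContDiff ℝ (⊤ : ℕ∞) (f ⋆[Lmul, volume] PP p c) :=
      (hcs_PP hs).contDiff_convolution_right _ hf (contDiff_PP hc)
    have hfd : ContDiff ℝ (⊤ : ℕ∞) (fderiv ℝ (f ⋆[Lmul, volume] PP p c)) :=
      hF.fderiv_right (mod_cast le_top)
    rw [iteratedFDeriv_succ_apply_right]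
    have hcomp := (ContinuousLinearMap.apply ℝ ℝ
        (Pi.single (v (Fin.last n)) (1 : ℝ))).iteratedFDeriv_comp_left (hfd.contDiffAt (x := t))
        (i := n) (by exact_mod_cast le_top)
    have e1 : iteratedFDeriv ℝ n (fun y => fderiv ℝ (f ⋆[Lmul, volume] PP p c) y) t
          (Fin.init fun k : Fin (n+1) => (Pi.single (v k) 1 : Fin p → ℝ))
          (Pi.single (v (Fin.last n)) 1)
        = iteratedFDeriv ℝ n
            ((ContinuousLinearMap.apply ℝ ℝ (Pi.single (v (Fin.last n)) (1 : ℝ))) ∘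
              fderiv ℝ (f ⋆[Lmul, volume] PP p c)) t
            (Fin.init fun k : Fin (n+1) => (Pi.single (v k) 1 : Fin p → ℝ)) := by
      rw [hcomp]
      simp [ContinuousLinearMap.compContinuousMultilinearMap_coe]
    rw [e1]
    have e2 : ((ContinuousLinearMap.apply ℝ ℝ (Pi.single (v (Fin.last n)) (1 : ℝ))) ∘
          fderiv ℝ (f ⋆[Lmul, volume] PP p c))
        = (f ⋆[Lmul, volume] PP p (Function.update c (v (Fin.last n))
            (deriv (c (v (Fin.last n)))))) := by
      funext a
      simp only [Function.comp_apply, ContinuousLinearMap.apply_apply]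
      exact step f hf hc hs _ a
    rw [e2]
    have hc' : ∀ j, ContDiff ℝ (⊤ : ℕ∞) (Function.update c (v (Fin.last n))
        (deriv (c (v (Fin.last n)))) j) := by
      intro j
      rcases eq_or_ne j (v (Fin.last n)) with h | h
      · subst h; simpa using (contDiff_infty_iff_deriv.mp (hc (v (Fin.last n)))).2
      · simpa [Function.update_apply, h] using hc j
    have hs' : ∀ j, HasCompactSupport (Function.update c (v (Fin.last n))
        (deriv (c (v (Fin.last n)))) j) := by
      intro j
      rcases eq_or_ne j (v (Fin.last n)) with h | h
      · subst h; simpa using (hs (v (Fin.last n))).deriv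
      · simpa [Function.update_apply, h] using hs j
    have e3 : (Fin.init fun k : Fin (n+1) => (Pi.single (v k) 1 : Fin p → ℝ))
        = fun k : Fin n => (Pi.single (v k.castSucc) 1 : Fin p → ℝ) := rfl
    rw [e3, IH (fun k => v k.castSucc) _ hc' hs']
    have e4 : (fun j => iteratedDeriv
          ((Finset.univ.filter fun k : Fin n => v k.castSucc = j).card)
          (Function.update c (v (Fin.last n)) (deriv (c (v (Fin.last n)))) j))
        = (fun j => iteratedDeriv
            ((Finset.univ.filter fun k : Fin (n+1) => v k = j).card) (c j)) := by
      funext j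
      have hcard : (Finset.univ.filter fun k : Fin (n+1) => v k = j).card
          = (Finset.univ.filter fun k : Fin n => v k.castSucc = j).card
            + (if v (Fin.last n) = j then 1 else 0) := by
        rw [Finset.card_filter, Finset.card_filter, Fin.sum_univ_castSucc]
      rcases eq_or_ne (v (Fin.last n)) j with h | h
      · subst h
        rw [hcard, if_pos rfl, Function.update_self, ← iteratedDeriv_succ']
      · rw [hcard, if_neg h, add_zero, Function.update_of_ne (Ne.symm h)]
    rw [e4]
end RegMaxAux2

namespace RegMaxAux3

variable {p : ℕ}

lemma inv_kills : ∀ (n : ℕ) (F : (Fin p → ℝ) → ℝ), ContDiff ℝ (⊤ : ℕ∞) F →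
    ∀ (j₀ : Fin p), (∀ (y : Fin p → ℝ) (δ : ℝ), F (y + δ • (Pi.single j₀ 1 : Fin p → ℝ)) = F y) →
    ∀ (v : Fin n → Fin p), (∃ k, v k = j₀) → ∀ t : Fin p → ℝ,
    iteratedFDeriv ℝ n F t (fun k => Pi.single (v k) 1) = 0 := by
  intro n
  induction n with
  | zero =>
    rintro F _ j₀ _ v ⟨k, _⟩ t
    exact k.elim0
  | succ n IH =>
    intro F hF j₀ hinv v hv t
    have hfd : ContDiff ℝ (⊤ : ℕ∞) (fderiv ℝ F) := hF.fderiv_right (mod_cast le_top)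
    rw [iteratedFDeriv_succ_apply_right]
    have hcomp := (ContinuousLinearMap.apply ℝ ℝ
        (Pi.single (v (Fin.last n)) (1 : ℝ))).iteratedFDeriv_comp_left (hfd.contDiffAt (x := t))
        (i := n) (by exact_mod_cast le_top)
    have e1 : iteratedFDeriv ℝ n (fun y => fderiv ℝ F y) t
          (Fin.init fun k : Fin (n+1) => (Pi.single (v k) 1 : Fin p → ℝ))
          (Pi.single (v (Fin.last n)) 1)
        = iteratedFDeriv ℝ n
            ((ContinuousLinearMap.apply ℝ ℝ (Pi.single (v (Fin.last n)) (1 : ℝ))) ∘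
              fderiv ℝ F) t
            (Fin.init fun k : Fin (n+1) => (Pi.single (v k) 1 : Fin p → ℝ)) := by
      rw [hcomp]
      simp [ContinuousLinearMap.compContinuousMultilinearMap_coe]
    rw [e1]
    have e2 : ((ContinuousLinearMap.apply ℝ ℝ (Pi.single (v (Fin.last n)) (1 : ℝ))) ∘
          fderiv ℝ F) = fun y => fderiv ℝ F y (Pi.single (v (Fin.last n)) 1) := rfl
    rw [e2]
    have hdiff : Differentiable ℝ F := hF.differentiable (by simp)
    rcases eq_or_ne (v (Fin.last n)) j₀ with h | h
    · -- the function y ↦ fderiv F y e_{j₀} is identically zero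
      have hzero : (fun y => fderiv ℝ F y (Pi.single (v (Fin.last n)) 1))
          = fun _ => (0 : ℝ) := by
        funext y
        rw [h]
        have h2 : HasDerivAt (fun δ : ℝ => y + δ • (Pi.single j₀ 1 : Fin p → ℝ))
            (Pi.single j₀ 1 : Fin p → ℝ) 0 := by
          simpa using ((hasDerivAt_id (0:ℝ)).smul_const (Pi.single j₀ 1 : Fin p → ℝ)).const_add y
        have h1 : HasFDerivAt F (fderiv ℝ F y)
            (y + (0:ℝ) • (Pi.single j₀ 1 : Fin p → ℝ)) := by
          simpa using (hdiff y).hasFDerivAt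
        have hd := h1.comp_hasDerivAt 0 h2
        rw [Function.comp_def] at hd
        have hconst : (fun δ : ℝ => F (y + δ • (Pi.single j₀ 1 : Fin p → ℝ)))
            = fun _ => F y := funext fun δ => hinv y δ
        rw [hconst] at hd
        exact ((hasDerivAt_const (0:ℝ) (F y)).unique hd).symm
      rw [hzero, iteratedFDeriv_zero_fun]
      rfl
    · -- recurse
      have hG : ContDiff ℝ (⊤ : ℕ∞)
          (fun y => fderiv ℝ F y (Pi.single (v (Fin.last n)) 1)) :=
        hfd.clm_apply contDiff_const
      have hGinv : ∀ (y : Fin p → ℝ) (δ : ℝ),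
          (fun y => fderiv ℝ F y (Pi.single (v (Fin.last n)) 1))
            (y + δ • (Pi.single j₀ 1 : Fin p → ℝ))
            = (fun y => fderiv ℝ F y (Pi.single (v (Fin.last n)) 1)) y := by
        intro y δ
        have h1 : HasFDerivAt (fun x => F (x + δ • (Pi.single j₀ 1 : Fin p → ℝ)))
            ((fderiv ℝ F (y + δ • (Pi.single j₀ 1 : Fin p → ℝ))).comp
              (ContinuousLinearMap.id ℝ _)) y :=
          (hdiff _).hasFDerivAt.comp y ((hasFDerivAt_id y).add_const _)
        have h2 : (fun x => F (x + δ • (Pi.single j₀ 1 : Fin p → ℝ))) = F :=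
          funext fun x => hinv x δ
        rw [h2] at h1
        have := h1.fderiv
        simp only [ContinuousLinearMap.comp_id] at this
        simp only [← this]
      obtain ⟨k, hk⟩ := hv
      have hklast : k ≠ Fin.last n := by
        intro hcon; rw [hcon] at hk; exact h hk
      obtain ⟨k', hk'⟩ := Fin.exists_castSucc_eq.mpr hklast
      have hwit : ∃ k' : Fin n, v (k'.castSucc) = j₀ := ⟨k', by rw [hk']; exact hk⟩
      have := IH (fun y => fderiv ℝ F y (Pi.single (v (Fin.last n)) 1)) hG j₀ hGinv
        (fun k => v k.castSucc) hwit t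
      exact this

end RegMaxAux3

namespace RegMaxAux4

lemma hcs_iteratedDeriv {f : ℝ → ℝ} (hf : HasCompactSupport f) (n : ℕ) :
    HasCompactSupport (iteratedDeriv n f) := by
  induction n with
  | zero => simpa using hf
  | succ n ih => rw [iteratedDeriv_succ]; exact ih.deriv

lemma support_iteratedDeriv_subset (n : ℕ) : ∀ f : ℝ → ℝ,
    Function.support (iteratedDeriv n f) ⊆ tsupport f := by
  induction n with
  | zero => intro f; simpa using subset_tsupport f
  | succ n ih =>
    intro f
    rw [iteratedDeriv_succ']
    refine (ih (deriv f)).trans ?_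
    exact closure_minimal (support_deriv_subset) isClosed_closure

lemma iteratedDeriv_aconst_mul {f : ℝ → ℝ} (hf : ContDiff ℝ (⊤ : ℕ∞) f) (a : ℝ) (n : ℕ)
    (x : ℝ) : iteratedDeriv n (fun u => a * f u) x = a * iteratedDeriv n f x := by
  have h1 := iteratedDerivWithin_const_mul (s := (Set.univ : Set ℝ)) (x := x)
    (Set.mem_univ x) uniqueDiffOn_univ a (((hf.of_le (mod_cast le_top)).contDiffOn (n := n)).contDiffWithinAt (Set.mem_univ x))
  rw [iteratedDerivWithin_univ, iteratedDerivWithin_univ] at h1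
  exact h1

lemma iteratedDeriv_scale {f : ℝ → ℝ} (hf : ContDiff ℝ (⊤ : ℕ∞) f) (a c : ℝ) (n : ℕ) (x : ℝ) :
    iteratedDeriv n (fun u => a * f (c * u)) x = a * (c ^ n * iteratedDeriv n f (c * x)) := by
  have hfc : ContDiff ℝ (⊤ : ℕ∞) (fun u => f (c * u)) :=
    hf.comp (contDiff_const.mul contDiff_id)
  rw [iteratedDeriv_aconst_mul hfc a n x]
  congr 1
  have := iteratedDeriv_comp_const_mul (f := f) (hf.of_le (mod_cast le_top) : ContDiff ℝ n f) c
  rw [this]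

end RegMaxAux4

namespace RegMaxAux5

variable {p : ℕ} [Nonempty (Fin p)]

lemma fmax_le (a b : Fin p → ℝ) : (⨆ j, a j) ≤ (⨆ j, b j) + ‖a - b‖ := by
  refine ciSup_le fun j => ?_
  have h1 : a j - b j ≤ ‖a - b‖ := by
    refine (le_abs_self _).trans ?_
    simpa [Real.norm_eq_abs] using norm_le_pi_norm (a - b) j
  have h2 : b j ≤ ⨆ i, b i := le_ciSup (Finite.bddAbove_range _) j
  linarith

lemma fmax_lip (a b : Fin p → ℝ) : |(⨆ j, a j) - (⨆ j, b j)| ≤ ‖a - b‖ := by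
  rw [abs_sub_le_iff]
  constructor
  · linarith [fmax_le a b]
  · have := fmax_le b a
    rw [norm_sub_rev] at this
    linarith

lemma fmax_cont : Continuous fun s : Fin p → ℝ => ⨆ j, s j := by
  refine (LipschitzWith.of_dist_le_mul (K := 1) fun a b => ?_).continuous
  rw [Real.dist_eq, dist_eq_norm, NNReal.coe_one, one_mul]
  exact fmax_lip a b

end RegMaxAux5

end RegMaxAuxSection

open RegMaxAux RegMaxAux2 RegMaxAux3 RegMaxAux4 RegMaxAux5

/-- **Derivative bounds for the regularized maximum.**
For every `p ≥ 1` there exists `C > 0` (depending only on `ρ` and `p`) such that for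
every `η ∈ (0,∞)^p`, every `t ∈ ℝ^p` and every multi-index `α` with `1 ≤ |α| ≤ 4`,
`|∂^α M_η(t)| ≤ C · min{η_j : α_j ≠ 0} · ∏_{α_i ≠ 0} η_i^{−α_i}`.
The iterated partial derivative `∂^α M_η(t)` is expressed as the `|α|`-th iterated
Fréchet derivative evaluated on a family of standard basis vectors in which the `j`-th
basis vector occurs exactly `α_j` times. -/
theorem regularized_max_deriv_bound
    (ρ : ℝ → ℝ)
    (hρ_smooth : ContDiff ℝ (⊤ : ℕ∞) ρ)
    (hρ_nonneg : ∀ x, 0 ≤ ρ x)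
    (hρ_supp : Function.support ρ ⊆ Set.Icc (-1 : ℝ) 1)
    (hρ_int : ∫ x : ℝ, ρ x = 1)
    (hρ_mean : ∫ x : ℝ, x * ρ x = 0)
    (p : ℕ) (hp : 1 ≤ p) :
    ∃ C > (0 : ℝ), ∀ (η : Fin p → ℝ), (∀ j, 0 < η j) →
      ∀ (M : (Fin p → ℝ) → ℝ),
        (∀ t : Fin p → ℝ,
          M t = ∫ h : Fin p → ℝ,
            (⨆ j, (t j + h j)) * ∏ j, (η j)⁻¹ * ρ (h j / η j)) →
        ∀ (α : Fin p → ℕ), 1 ≤ ∑ j, α j → ∑ j, α j ≤ 4 →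
          ∀ (ι : Fin (∑ j, α j) → Fin p),
            (∀ j, (Finset.univ.filter fun k => ι k = j).card = α j) →
            ∀ t : Fin p → ℝ,
              |iteratedFDeriv ℝ (∑ j, α j) M t (fun k => Pi.single (ι k) (1 : ℝ))| ≤
                C * (⨅ j : {j : Fin p // α j ≠ 0}, η j) * ∏ j, ((η j)⁻¹) ^ (α j) := by
  classical
  haveI : Nonempty (Fin p) := ⟨⟨0, hp⟩⟩
  set B : ℝ := 1 + ∑ k ∈ Finset.range 5, ∫ w : ℝ, |iteratedDeriv k ρ w| with hBdef
  have hRnonneg : ∀ k : ℕ, 0 ≤ ∫ w : ℝ, |iteratedDeriv k ρ w| :=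
    fun k => integral_nonneg fun w => abs_nonneg _
  have hB1 : (1 : ℝ) ≤ B :=
    le_add_of_nonneg_right (Finset.sum_nonneg fun k _ => hRnonneg k)
  have hBpos : (0 : ℝ) < B := lt_of_lt_of_le one_pos hB1
  have hρcs : HasCompactSupport ρ := by
    apply HasCompactSupport.intro isCompact_Icc
    intro x hx
    by_contra h0
    exact hx (hρ_supp h0)
  have htsupp : tsupport ρ ⊆ Set.Icc (-1 : ℝ) 1 :=
    closure_minimal hρ_supp isClosed_Icc
  refine ⟨B ^ p, pow_pos hBpos p, ?_⟩
  intro η hη M hM α hsum1 hsum4 ι hι t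
  -- the minimizing index
  have hex : ∃ j, α j ≠ 0 := by
    by_contra hcon
    push_neg at hcon
    have : (∑ j, α j) = 0 := Finset.sum_eq_zero fun j _ => hcon j
    omega
  haveI hne : Nonempty {j : Fin p // α j ≠ 0} := ⟨⟨hex.choose, hex.choose_spec⟩⟩
  obtain ⟨j₀s, hj₀min⟩ := Finite.exists_min fun j : {j : Fin p // α j ≠ 0} => η (j : Fin p)
  have hInf : (⨅ j : {j : Fin p // α j ≠ 0}, η (j : Fin p)) = η (j₀s : Fin p) :=
    le_antisymm (ciInf_le (Finite.bddBelow_range _) j₀s) (le_ciInf hj₀min)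
  set j₀ : Fin p := (j₀s : Fin p) with hj₀def
  -- the mollifier components
  set ψ : Fin p → ℝ → ℝ := fun j u => (η j)⁻¹ * ρ (-(η j)⁻¹ * u) with hψdef
  have hψc : ∀ j, ContDiff ℝ (⊤ : ℕ∞) (ψ j) :=
    fun j => contDiff_const.mul (hρ_smooth.comp (contDiff_const.mul contDiff_id))
  have hψs : ∀ j, HasCompactSupport (ψ j) := by
    intro j
    apply HasCompactSupport.intro (isCompact_Icc (a := -(η j)) (b := η j))
    intro u hu
    have hρz : ρ (-(η j)⁻¹ * u) = 0 := by
      by_contra h0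
      have hmem := hρ_supp h0
      rw [Set.mem_Icc] at hmem
      apply hu
      rw [Set.mem_Icc]
      have hinv : (η j) * (η j)⁻¹ = 1 := mul_inv_cancel₀ (ne_of_gt (hη j))
      constructor <;> nlinarith [hmem.1, hmem.2, hη j]
    have hρz' : ρ (-((η j)⁻¹ * u)) = 0 := by rw [← neg_mul]; exact hρz
    simp [hψdef, hρz']
  -- the max function
  set fmax : (Fin p → ℝ) → ℝ := fun s => ⨆ j, s j with hfmdef
  have hfmc : Continuous fmax := fmax_cont
  have hfmli : LocallyIntegrable fmax volume := hfmc.locallyIntegrable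
  -- M as a convolution
  have hMconv : M = fmax ⋆[Lmul, volume] PP p ψ := by
    funext x
    rw [hM x, convolution_def,
      ← integral_add_left_eq_self (fun s => (Lmul (fmax s)) (PP p ψ (x - s))) x]
    congr 1
    funext h
    have hxs : x - (x + h) = -h := by abel
    simp only [ContinuousLinearMap.mul_apply', hxs]
    congr 1
    refine Finset.prod_congr rfl fun j _ => ?_
    show (η j)⁻¹ * ρ (h j / η j) = ψ j ((-h) j)
    rw [hψdef]
    congr 1
    rw [div_eq_inv_mul]
    simp
  -- split fmax into r + q
  set q : (Fin p → ℝ) → ℝ := fun s => fmax (Function.update s j₀ (t j₀)) with hqdef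
  set r : (Fin p → ℝ) → ℝ := fun s => fmax s - q s with hrdef
  have hupd : Continuous fun s : Fin p → ℝ => Function.update s j₀ (t j₀) := by
    apply continuous_pi
    intro i
    have : (fun s : Fin p → ℝ => Function.update s j₀ (t j₀) i)
        = fun s => if i = j₀ then t j₀ else s i := by
      funext s
      exact Function.update_apply s j₀ (t j₀) i
    rw [this]
    split_ifs
    · exact continuous_const
    · exact continuous_apply i
  have hqcont : Continuous q := hfmc.comp hupd
  have hrcont : Continuous r := hfmc.sub hqcont
  have hqli : LocallyIntegrable q volume := hqcont.locallyIntegrable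
  have hrli : LocallyIntegrable r volume := hrcont.locallyIntegrable
  have hPPψc : Continuous (PP p ψ) := (contDiff_PP hψc).continuous
  have hrce : ConvolutionExists r (PP p ψ) Lmul volume :=
    (hcs_PP hψs).convolutionExists_right Lmul hrli hPPψc
  have hqce : ConvolutionExists q (PP p ψ) Lmul volume :=
    (hcs_PP hψs).convolutionExists_right Lmul hqli hPPψc
  have hrq : r + q = fmax := by
    funext s
    simp [hrdef]
  have hM2 : M = (r ⋆[Lmul, volume] PP p ψ) + (q ⋆[Lmul, volume] PP p ψ) := by
    funext x
    rw [hMconv, ← hrq]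
    exact (hrce x).add_distrib (hqce x)
  have hsr : ContDiff ℝ (⊤ : ℕ∞) (r ⋆[Lmul, volume] PP p ψ) :=
    (hcs_PP hψs).contDiff_convolution_right _ hrli (contDiff_PP hψc)
  have hsq : ContDiff ℝ (⊤ : ℕ∞) (q ⋆[Lmul, volume] PP p ψ) :=
    (hcs_PP hψs).contDiff_convolution_right _ hqli (contDiff_PP hψc)
  rw [hM2, iteratedFDeriv_add_apply (i := ∑ j, α j) (hsr.contDiffAt.of_le (mod_cast le_top)) (hsq.contDiffAt.of_le (mod_cast le_top))]
  -- the q-part vanishes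
  have hqzero : iteratedFDeriv ℝ (∑ j, α j) (q ⋆[Lmul, volume] PP p ψ) t
      (fun k => Pi.single (ι k) (1 : ℝ)) = 0 := by
    apply inv_kills (∑ j, α j) _ hsq j₀
    · -- invariance under translations in direction j₀
      intro y δ
      rw [convolution_def, convolution_def,
        ← integral_add_left_eq_self
          (fun s => (Lmul (q s)) (PP p ψ (y + δ • (Pi.single j₀ 1 : Fin p → ℝ) - s)))
          (δ • (Pi.single j₀ 1 : Fin p → ℝ))]
      congr 1
      funext s
      have hupd1 : Function.update (δ • (Pi.single j₀ 1 : Fin p → ℝ) + s) j₀ (t j₀)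
          = Function.update s j₀ (t j₀) := by
        funext i
        rcases eq_or_ne i j₀ with h | h
        · subst h; simp
        · simp [Function.update_apply, h, Pi.single_apply]
      have h1 : q (δ • (Pi.single j₀ 1 : Fin p → ℝ) + s) = q s := by
        simp only [hqdef]
        rw [hupd1]
      have h2 : y + δ • (Pi.single j₀ 1 : Fin p → ℝ)
          - (δ • (Pi.single j₀ 1 : Fin p → ℝ) + s) = y - s := by abel
      rw [h1, h2]
    · -- some direction equals j₀
      have hpos : 0 < (Finset.univ.filter fun k => ι k = j₀).card := by
        rw [hι j₀]
        exact Nat.pos_of_ne_zero j₀s.2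
      obtain ⟨k, hk⟩ := Finset.card_pos.mp hpos
      exact ⟨k, (Finset.mem_filter.mp hk).2⟩
  rw [ContinuousMultilinearMap.add_apply, hqzero, add_zero]
  -- the r-part via the convolution chain
  have hchain := chain r hrli (∑ j, α j) ι ψ hψc hψs t
  have hcards : (fun j => iteratedDeriv ((Finset.univ.filter fun k => ι k = j).card) (ψ j))
      = fun j => iteratedDeriv (α j) (ψ j) := by
    funext j
    rw [hι j]
  rw [hcards] at hchain
  rw [hchain]
  -- now the quantitative bound
  rw [hInf]
  set cfin : Fin p → ℝ → ℝ := fun j => iteratedDeriv (α j) (ψ j) with hcfdef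
  have hcf : ∀ j u, cfin j u
      = (η j)⁻¹ * ((-(η j)⁻¹) ^ (α j) * iteratedDeriv (α j) ρ (-(η j)⁻¹ * u)) := by
    intro j u
    exact iteratedDeriv_scale hρ_smooth ((η j)⁻¹) (-(η j)⁻¹) (α j) u
  have habs : ∀ j u, |cfin j u|
      = ((η j)⁻¹ * ((η j)⁻¹) ^ (α j)) * |iteratedDeriv (α j) ρ (-(η j)⁻¹ * u)| := by
    intro j u
    rw [hcf j u, abs_mul, abs_mul, abs_pow, abs_neg, abs_inv, abs_of_pos (hη j)]
    ring
  set R : Fin p → ℝ := fun j => ∫ w : ℝ, |iteratedDeriv (α j) ρ w| with hRdef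
  have hRjnonneg : ∀ j, 0 ≤ R j := fun j => hRnonneg (α j)
  have hα4 : ∀ j, α j ≤ 4 := fun j =>
    le_trans (Finset.single_le_sum (f := α) (fun i _ => Nat.zero_le _) (Finset.mem_univ j)) hsum4
  have hRB : ∀ j, R j ≤ B := by
    intro j
    have hmem : α j ∈ Finset.range 5 := Finset.mem_range.mpr (by have := hα4 j; omega)
    have h := Finset.single_le_sum (f := fun k => ∫ w : ℝ, |iteratedDeriv k ρ w|)
      (fun k _ => hRnonneg k) hmem
    rw [hRdef, hBdef]
    dsimp only
    linarith
  have hcontD : ∀ k : ℕ, Continuous (iteratedDeriv k ρ) :=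
    fun k => hρ_smooth.continuous_iteratedDeriv k (mod_cast le_top)
  have hcsD : ∀ k : ℕ, HasCompactSupport (iteratedDeriv k ρ) :=
    fun k => hcs_iteratedDeriv hρcs k
  set Gb : Fin p → ℝ → ℝ := fun j u => (if j = j₀ then |u| else 1) * |cfin j u| with hGbdef
  have hGbnon : ∀ j u, 0 ≤ Gb j u := by
    intro j u
    apply mul_nonneg
    · split_ifs
      · exact abs_nonneg u
      · exact zero_le_one
    · exact abs_nonneg _
  have hcfc : ∀ j, Continuous (cfin j) :=
    fun j => (hψc j).continuous_iteratedDeriv (α j) (mod_cast le_top)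
  have hcfcs : ∀ j, HasCompactSupport (cfin j) := fun j => hcs_iteratedDeriv (hψs j) (α j)
  have hGbc : ∀ j, Continuous (Gb j) := by
    intro j
    apply Continuous.mul
    · split_ifs
      · exact continuous_abs
      · exact continuous_const
    · exact (hcfc j).abs
  have hGbcs : ∀ j, HasCompactSupport (Gb j) := by
    intro j
    apply HasCompactSupport.intro (hcfcs j)
    intro u hu
    simp [hGbdef, image_eq_zero_of_notMem_tsupport hu]
  set D : (Fin p → ℝ) → ℝ := fun s => ∏ j, Gb j (t j - s j) with hDdef
  have hDc : Continuous D := by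
    apply continuous_finset_prod
    intro j _
    exact (hGbc j).comp (continuous_const.sub (continuous_apply j))
  have hDcs : HasCompactSupport D := by
    apply HasCompactSupport.intro
      (K := Set.univ.pi fun j => (fun u : ℝ => t j - u) '' tsupport (Gb j))
      (isCompact_univ_pi fun j => ((hGbcs j).image (continuous_const.sub continuous_id)))
    intro s hs
    simp only [Set.mem_univ_pi, not_forall] at hs
    obtain ⟨j, hj⟩ := hs
    have hnm : t j - s j ∉ tsupport (Gb j) := by
      intro hmem
      exact hj ⟨t j - s j, hmem, by ring⟩
    exact Finset.prod_eq_zero (Finset.mem_univ j) (image_eq_zero_of_notMem_tsupport hnm)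
  have hDint : Integrable D volume := hDc.integrable_of_hasCompactSupport hDcs
  have hrb : ∀ s : Fin p → ℝ, |r s| ≤ |t j₀ - s j₀| := by
    intro s
    have h1 : |r s| ≤ ‖s - Function.update s j₀ (t j₀)‖ :=
      fmax_lip s (Function.update s j₀ (t j₀))
    have h2 : s - Function.update s j₀ (t j₀)
        = (Pi.single j₀ (s j₀ - t j₀) : Fin p → ℝ) := by
      funext i
      rcases eq_or_ne i j₀ with h | h
      · subst h; simp
      · simp [Function.update_apply, h, Pi.single_apply]
    have h3 : ‖(Pi.single j₀ (s j₀ - t j₀) : Fin p → ℝ)‖ ≤ |s j₀ - t j₀| := by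
      refine (pi_norm_le_iff_of_nonneg (abs_nonneg _)).mpr fun i => ?_
      rcases eq_or_ne i j₀ with h | h
      · subst h; simp [Real.norm_eq_abs]
      · simp [Pi.single_apply, h, Real.norm_eq_abs]
    rw [h2] at h1
    calc |r s| ≤ |s j₀ - t j₀| := h1.trans h3
      _ = |t j₀ - s j₀| := abs_sub_comm _ _
  have hpt : ∀ s : Fin p → ℝ, ‖(Lmul (r s)) (PP p cfin (t - s))‖ ≤ D s := by
    intro s
    rw [ContinuousLinearMap.mul_apply', Real.norm_eq_abs, abs_mul]
    have hP : |PP p cfin (t - s)| = ∏ j, |cfin j (t j - s j)| := by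
      rw [PP, Finset.abs_prod]
      rfl
    rw [hP]
    have hDs : D s = |t j₀ - s j₀| * ∏ j, |cfin j (t j - s j)| := by
      rw [hDdef]
      dsimp only
      rw [Finset.prod_mul_distrib, Finset.prod_ite_eq' Finset.univ j₀ fun j => |t j - s j|,
        if_pos (Finset.mem_univ j₀)]
    rw [hDs]
    exact mul_le_mul_of_nonneg_right (hrb s) (Finset.prod_nonneg fun j _ => abs_nonneg _)
  have hnorm : |(r ⋆[Lmul, volume] PP p cfin) t| ≤ ∫ s, D s := by
    rw [convolution_def, ← Real.norm_eq_abs]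
    exact norm_integral_le_of_norm_le hDint (Filter.Eventually.of_forall hpt)
  have hDval : (∫ s, D s) = ∏ j, ∫ u : ℝ, Gb j u := by
    have h1 : (∫ s, D s) = ∫ s, (fun x : Fin p → ℝ => ∏ j, Gb j (x j)) (t - s) := rfl
    rw [h1, integral_sub_left_eq_self (fun x : Fin p → ℝ => ∏ j, Gb j (x j)) volume t]
    exact MeasureTheory.integral_fintype_prod_eq_prod Gb
  have hkey : ∀ j, (∫ u : ℝ, |cfin j u|) = ((η j)⁻¹) ^ (α j) * R j := by
    intro j
    have hstep : (∫ u : ℝ, |cfin j u|)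
        = ((η j)⁻¹ * ((η j)⁻¹) ^ (α j)) * ∫ u : ℝ, |iteratedDeriv (α j) ρ (-(η j)⁻¹ * u)| := by
      rw [← integral_const_mul]
      congr 1
      funext u
      exact habs j u
    rw [hstep,
      Measure.integral_comp_mul_left (fun w => |iteratedDeriv (α j) ρ w|) (-(η j)⁻¹)]
    have hc : |(-(η j)⁻¹)⁻¹| = η j := by
      rw [inv_neg, inv_inv, abs_neg, abs_of_pos (hη j)]
    rw [hc, smul_eq_mul, hRdef]
    have hfix : (η j)⁻¹ * ((η j)⁻¹) ^ (α j) * (η j * ∫ w : ℝ, |iteratedDeriv (α j) ρ w|)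
        = ((η j)⁻¹ * η j) * (((η j)⁻¹) ^ (α j) * ∫ w : ℝ, |iteratedDeriv (α j) ρ w|) := by
      ring
    rw [hfix, inv_mul_cancel₀ (ne_of_gt (hη j)), one_mul]
  have hGbval : ∀ j, j ≠ j₀ → (∫ u : ℝ, Gb j u) = ((η j)⁻¹) ^ (α j) * R j := by
    intro j hj
    have : (fun u : ℝ => Gb j u) = fun u => |cfin j u| := by
      funext u
      rw [hGbdef]
      dsimp only
      rw [if_neg hj, one_mul]
    rw [this, hkey j]
  have hGbj₀ : (∫ u : ℝ, Gb j₀ u) ≤ η j₀ * (((η j₀)⁻¹) ^ (α j₀) * R j₀) := by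
    have hGb0 : (fun u : ℝ => Gb j₀ u)
        = fun u => ((η j₀)⁻¹ * ((η j₀)⁻¹) ^ (α j₀))
            * (|u| * |iteratedDeriv (α j₀) ρ (-(η j₀)⁻¹ * u)|) := by
      funext u
      rw [hGbdef]
      dsimp only
      rw [if_pos rfl, habs j₀ u]
      ring
    have hwb : ∀ w : ℝ, |w| * |iteratedDeriv (α j₀) ρ w| ≤ |iteratedDeriv (α j₀) ρ w| := by
      intro w
      rcases eq_or_ne (iteratedDeriv (α j₀) ρ w) 0 with hz | hz
      · simp [hz]
      · have hw : w ∈ tsupport ρ := support_iteratedDeriv_subset (α j₀) ρ hz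
        have hmem := htsupp hw
        rw [Set.mem_Icc] at hmem
        have : |w| ≤ 1 := abs_le.mpr ⟨hmem.1, hmem.2⟩
        exact mul_le_of_le_one_left (abs_nonneg _) this
    have hint1 : Integrable (fun w : ℝ => |w| * |iteratedDeriv (α j₀) ρ w|) volume := by
      apply Continuous.integrable_of_hasCompactSupport
        (continuous_abs.mul (hcontD (α j₀)).abs)
      apply HasCompactSupport.intro (hcsD (α j₀))
      intro u hu
      simp [image_eq_zero_of_notMem_tsupport hu]
    have hint2 : Integrable (fun w : ℝ => |iteratedDeriv (α j₀) ρ w|) volume :=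
      ((hcontD (α j₀)).abs).integrable_of_hasCompactSupport
        (by
          apply HasCompactSupport.intro (hcsD (α j₀))
          intro u hu
          simp [image_eq_zero_of_notMem_tsupport hu])
    have hmono : (∫ w : ℝ, |w| * |iteratedDeriv (α j₀) ρ w|) ≤ R j₀ :=
      integral_mono hint1 hint2 hwb
    -- change of variables
    have hg : ∀ u : ℝ, (fun w : ℝ => (η j₀ * |w|) * |iteratedDeriv (α j₀) ρ w|) (-(η j₀)⁻¹ * u)
        = |u| * |iteratedDeriv (α j₀) ρ (-(η j₀)⁻¹ * u)| := by
      intro u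
      dsimp only
      congr 1
      rw [abs_mul, abs_neg, abs_inv, abs_of_pos (hη j₀)]
      rw [← mul_assoc, mul_inv_cancel₀ (ne_of_gt (hη j₀)), one_mul]
    have hcov : (∫ u : ℝ, |u| * |iteratedDeriv (α j₀) ρ (-(η j₀)⁻¹ * u)|)
        = η j₀ * ∫ w : ℝ, (η j₀ * |w|) * |iteratedDeriv (α j₀) ρ w| := by
      rw [← funext hg,
        Measure.integral_comp_mul_left
          (fun w : ℝ => (η j₀ * |w|) * |iteratedDeriv (α j₀) ρ w|) (-(η j₀)⁻¹)]
      rw [inv_neg, inv_inv, abs_neg, abs_of_pos (hη j₀), smul_eq_mul]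
    have hpull : (∫ w : ℝ, (η j₀ * |w|) * |iteratedDeriv (α j₀) ρ w|)
        = η j₀ * ∫ w : ℝ, |w| * |iteratedDeriv (α j₀) ρ w| := by
      rw [← integral_const_mul]
      congr 1
      funext w
      ring
    calc (∫ u : ℝ, Gb j₀ u)
        = ((η j₀)⁻¹ * ((η j₀)⁻¹) ^ (α j₀))
            * ∫ u : ℝ, |u| * |iteratedDeriv (α j₀) ρ (-(η j₀)⁻¹ * u)| := by
          rw [hGb0, integral_const_mul]
      _ = ((η j₀)⁻¹ * ((η j₀)⁻¹) ^ (α j₀))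
            * (η j₀ * (η j₀ * ∫ w : ℝ, |w| * |iteratedDeriv (α j₀) ρ w|)) := by
          rw [hcov, hpull]
      _ = ((η j₀) * (η j₀)⁻¹)
            * (η j₀ * (((η j₀)⁻¹) ^ (α j₀) * ∫ w : ℝ, |w| * |iteratedDeriv (α j₀) ρ w|)) := by
          ring
      _ = η j₀ * (((η j₀)⁻¹) ^ (α j₀) * ∫ w : ℝ, |w| * |iteratedDeriv (α j₀) ρ w|) := by
          rw [mul_inv_cancel₀ (ne_of_gt (hη j₀)), one_mul]
      _ ≤ η j₀ * (((η j₀)⁻¹) ^ (α j₀) * R j₀) := by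
          apply mul_le_mul_of_nonneg_left _ (le_of_lt (hη j₀))
          exact mul_le_mul_of_nonneg_left hmono (pow_nonneg (inv_nonneg.mpr (le_of_lt (hη j₀))) _)
  -- put everything together
  have hprodle : (∏ j, ∫ u : ℝ, Gb j u)
      ≤ ∏ j, ((if j = j₀ then η j₀ else 1) * (((η j)⁻¹) ^ (α j) * B)) := by
    apply Finset.prod_le_prod (fun j _ => integral_nonneg fun u => hGbnon j u)
    intro j _
    rcases eq_or_ne j j₀ with h | h
    · rw [if_pos h, h]
      refine hGbj₀.trans ?_
      apply mul_le_mul_of_nonneg_left _ (le_of_lt (hη j₀))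
      exact mul_le_mul_of_nonneg_left (hRB j₀)
        (pow_nonneg (inv_nonneg.mpr (le_of_lt (hη j₀))) _)
    · rw [if_neg h, one_mul, hGbval j h]
      exact mul_le_mul_of_nonneg_left (hRB j) (pow_nonneg (inv_nonneg.mpr (le_of_lt (hη j))) _)
  have hprodeq : (∏ j, ((if j = j₀ then η j₀ else 1) * (((η j)⁻¹) ^ (α j) * B)))
      = η j₀ * ((∏ j, ((η j)⁻¹) ^ (α j)) * B ^ p) := by
    rw [Finset.prod_mul_distrib, Finset.prod_mul_distrib, Finset.prod_const,
      Finset.prod_ite_eq' Finset.univ j₀ fun _ => η j₀, if_pos (Finset.mem_univ j₀),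
      Finset.card_univ, Fintype.card_fin]
    try ring
  calc |(r ⋆[Lmul, volume] PP p cfin) t| ≤ ∫ s, D s := hnorm
    _ = ∏ j, ∫ u : ℝ, Gb j u := hDval
    _ ≤ η j₀ * ((∏ j, ((η j)⁻¹) ^ (α j)) * B ^ p) := by rw [← hprodeq]; exact hprodle
    _ = B ^ p * η j₀ * ∏ j, ((η j)⁻¹) ^ (α j) := by ring
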